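/- arXiv:2005.06329 — 3 statements merged into one kernel-verified Lean document; each statement's English description precedes it below -/
import Mathlib

section
/- For every k ∈ ℕ and every binary string S, every factor of φ(S) of length 2k+4 contains at most three occurrences of the letter 1. -/
/-- Hamming distance between two (equal-length) strings:
the number of positions where they differ. -/
def ham : List Bool → List Bool → ℕ
  | x :: U, y :: V => (if x = y then 0 else 1) + ham U V
  | _, _ => 0

/-- The morphism `φ`: `φ(0) = 0^{2k+4} 1010 0^{2k+4}` and `φ(1) = 0^{2k+4} 1011 0^{2k+4}`,
with `0 ↦ false`, `1 ↦ true`. -/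
def phi (k : ℕ) (S : List Bool) : List Bool :=
  S.flatMap fun x =>
    List.replicate (2 * k + 4) false ++ [true, false, true, x] ++
      List.replicate (2 * k + 4) false

/-- `γ(S) = 1^{2k+4} · φ(S)`. -/
def gamma (k : ℕ) (S : List Bool) : List Bool :=
  List.replicate (2 * k + 4) true ++ phi k S

lemma infix_append_cases {α : Type*} {X A B : List α} (h : X <:+: A ++ B) :
    X <:+: A ∨ X <:+: B ∨ ∃ X1 X2, X = X1 ++ X2 ∧ X1 <:+ A ∧ X2 <+: B := by
  obtain ⟨s, t, hst⟩ := h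
  rcases le_or_gt (s.length + X.length) A.length with hle | h1
  · left
    have h0 : (s ++ X ++ t).take A.length = A := by rw [hst, List.take_left]
    have hA : A = s ++ X ++ t.take (A.length - (s ++ X).length) := by
      conv_lhs => rw [← h0]
      rw [List.take_append, List.take_of_length_le (by simp; omega)]
    exact ⟨s, _, hA.symm⟩
  rcases le_or_gt A.length s.length with hge | h2
  · right; left
    have h0 : (s ++ X ++ t).drop A.length = B := by rw [hst, List.drop_left]
    have hB : B = s.drop A.length ++ X ++ t := by
      conv_lhs => rw [← h0]
      rw [List.drop_append, List.drop_append,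
        show A.length - (s ++ X).length = 0 from (by simp; omega),
        show A.length - s.length = 0 from (by omega)]
      simp
    exact ⟨s.drop A.length, t, hB.symm⟩
  · right; right
    have h0 : (s ++ X ++ t).take A.length = A := by rw [hst, List.take_left]
    have h0' : (s ++ X ++ t).drop A.length = B := by rw [hst, List.drop_left]
    refine ⟨X.take (A.length - s.length), X.drop (A.length - s.length),
      (List.take_append_drop _ _).symm, ?_, ?_⟩
    · have hA : A = s ++ X.take (A.length - s.length) := by
        conv_lhs => rw [← h0]
        rw [List.take_append,
          show A.length - (s ++ X).length = 0 from (by simp; omega), List.take_zero,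
          List.append_nil, List.take_append,
          List.take_of_length_le (by omega)]
      exact ⟨s, hA.symm⟩
    · have hB : B = X.drop (A.length - s.length) ++ t := by
        conv_lhs => rw [← h0']
        rw [List.drop_append, List.drop_append,
          List.drop_eq_nil_of_le (by omega),
          show A.length - (s ++ X).length = 0 from (by simp; omega)]
        simp
      exact ⟨t, hB.symm⟩

lemma suffix_short {α : Type*} {X A R : List α} (h : X <:+ A ++ R)
    (hl : X.length ≤ R.length) : X <:+ R := by
  obtain ⟨s, hs⟩ := h
  have hlen : s.length + X.length = A.length + R.length := by
    have := congrArg List.length hs; simpa using this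
  have h0 : X = (A ++ R).drop (A.length + R.length - X.length) := by
    have := congrArg (List.drop s.length) hs
    rw [List.drop_left] at this
    conv_lhs => rw [this]
    congr 1; omega
  rw [h0, List.drop_append, List.drop_eq_nil_of_le (by omega),
    List.nil_append]
  exact List.drop_suffix _ _

lemma prefix_short {α : Type*} {X R C : List α} (h : X <+: R ++ C)
    (hl : X.length ≤ R.length) : X <+: R := by
  obtain ⟨t, ht⟩ := h
  have h0 : X = (R ++ C).take X.length := by rw [← ht, List.take_left]
  rw [h0, List.take_append, Nat.sub_eq_zero_of_le hl, List.take_zero,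
    List.append_nil]
  exact List.take_prefix _ _

lemma count_replicate_false (n : ℕ) : (List.replicate n false).count true = 0 := by
  rw [List.count_replicate]; simp

lemma count_block (k : ℕ) (a : Bool) :
    (List.replicate (2 * k + 4) false ++ [true, false, true, a] ++
      List.replicate (2 * k + 4) false).count true ≤ 3 := by
  rw [List.count_append, List.count_append, count_replicate_false]
  cases a <;> simp

lemma key (k : ℕ) (S : List Bool) : ∀ X : List Bool, X <:+: phi k S →
    X.length ≤ 2 * k + 4 → X.count true ≤ 3 := by
  induction S with
  | nil =>
    intro X hX _
    simp [phi] at hX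
    simp [hX]
  | cons a S ih =>
    intro X hX hlen
    have hphi : phi k (a :: S) =
        (List.replicate (2 * k + 4) false ++ [true, false, true, a] ++
          List.replicate (2 * k + 4) false) ++ phi k S := by
      simp [phi]
    rw [hphi] at hX
    rcases infix_append_cases hX with h | h | ⟨X1, X2, hsplit, h1, h2⟩
    · exact le_trans (h.sublist.count_le _) (count_block k a)
    · exact ih X h hlen
    · have hl12 : X1.length + X2.length ≤ 2 * k + 4 := by
        have := congrArg List.length hsplit
        rw [List.length_append] at this
        omega
      rw [hsplit, List.count_append]
      have e1 : X1.count true = 0 := by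
        have hs : X1 <:+ List.replicate (2 * k + 4) false :=
          suffix_short h1 (by simp; omega)
        have := hs.sublist.count_le true
        rw [count_replicate_false] at this
        omega
      have e2 : X2.count true = 0 := by
        rcases S with _ | ⟨b, S'⟩
        · simp [phi] at h2
          simp [h2]
        · have hphi2 : phi k (b :: S') = List.replicate (2 * k + 4) false ++
              ([true, false, true, b] ++ List.replicate (2 * k + 4) false ++ phi k S') := by
            simp [phi]
          rw [hphi2] at h2
          have hp : X2 <+: List.replicate (2 * k + 4) false :=
            prefix_short h2 (by simp; omega)
          have := hp.sublist.count_le true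
          rw [count_replicate_false] at this
          omega
      omega

theorem stmt1 (k : ℕ) (S X : List Bool)
    (hX : X <:+: phi k S) (hlen : X.length = 2 * k + 4) :
    X.count true ≤ 3 :=
  key k S X hX (le_of_eq hlen)
end

section
/- Let k ∈ ℕ, let S_1, …, S_m (m ≥ 2) be binary strings of length ℓ ≥ 1, and let T = γ(S_1)·γ(S_2)⋯γ(S_m). If S is a binary string of length ℓ with Ham(S, S_i) ≤ k for all i = 1, …, m, then C = 1^{2k+4}·φ(S) = γ(S) is a k-approximate cover of T under the Hamming distance. -/
/-- `C` is a `k`-approximate cover of `T` under the Hamming distance: `|C| < |T|` and every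
position `t` of `T` is covered by a `k`-approximate occurrence of `C` in `T`. -/
def IsApproxCover (k : ℕ) (C T : List Bool) : Prop :=
  C.length < T.length ∧
    ∀ t < T.length, ∃ i, i + C.length ≤ T.length ∧
      ham C ((T.drop i).take C.length) ≤ k ∧ i ≤ t ∧ t < i + C.length

lemma ham_refl (A : List Bool) : ham A A = 0 := by
  induction A with
  | nil => rfl
  | cons x U ih => simp [ham, ih]

lemma ham_append (A B A' B' : List Bool) (h : A.length = A'.length) :
    ham (A ++ B) (A' ++ B') = ham A A' + ham B B' := by
  induction A generalizing A' with
  | nil => cases A' with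
    | nil => simp [ham]
    | cons y V => simp at h
  | cons x U ih =>
    cases A' with
    | nil => simp at h
    | cons y V =>
      simp at h
      simp [ham, ih V h]
      ring

lemma ham_phi (k : ℕ) (S S' : List Bool) (h : S.length = S'.length) :
    ham (phi k S) (phi k S') = ham S S' := by
  induction S generalizing S' with
  | nil =>
    cases S' with
    | nil => simp [phi, ham]
    | cons y V => simp at h
  | cons x U ih =>
    cases S' with
    | nil => simp at h
    | cons y V =>
      simp at h
      have e1 : phi k (x :: U) =
          ((List.replicate (2*k+4) false ++ [true, false, true]) ++
            (x :: List.replicate (2*k+4) false)) ++ phi k U := by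
        simp [phi, List.flatMap_cons]
      have e2 : phi k (y :: V) =
          ((List.replicate (2*k+4) false ++ [true, false, true]) ++
            (y :: List.replicate (2*k+4) false)) ++ phi k V := by
        simp [phi, List.flatMap_cons]
      rw [e1, e2, ham_append _ _ _ _ (by simp),
        ham_append _ _ _ _ (by simp), ih V h]
      simp [ham, ham_refl]

lemma ham_gamma (k : ℕ) (S S' : List Bool) (h : S.length = S'.length) :
    ham (gamma k S) (gamma k S') = ham S S' := by
  rw [gamma, gamma, ham_append _ _ _ _ (by simp), ham_refl, ham_phi k S S' h]
  simp

lemma phi_length (k : ℕ) (S : List Bool) : (phi k S).length = S.length * (4*k+12) := by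
  induction S with
  | nil => simp [phi]
  | cons x U ih =>
    have : phi k (x :: U) = (List.replicate (2 * k + 4) false ++ [true, false, true, x] ++
      List.replicate (2 * k + 4) false) ++ phi k U := by simp [phi, List.flatMap_cons]
    rw [this]
    simp [ih]
    ring

lemma gamma_length (k : ℕ) (S : List Bool) :
    (gamma k S).length = 2*k+4 + S.length * (4*k+12) := by
  simp [gamma, phi_length]

lemma flatten_length (L : ℕ) (Ls : List (List Bool)) (h : ∀ A ∈ Ls, A.length = L) :
    Ls.flatten.length = Ls.length * L := by
  induction Ls with
  | nil => simp
  | cons A Ls ih =>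
    simp only [List.flatten_cons, List.length_append, List.length_cons]
    rw [h A (by simp), ih (fun B hB => h B (by simp [hB]))]
    ring

lemma flatten_slice (L : ℕ) (Ls : List (List Bool)) (h : ∀ A ∈ Ls, A.length = L) :
    ∀ j, (hj : j < Ls.length) → (Ls.flatten.drop (j*L)).take L = Ls[j] := by
  induction Ls with
  | nil => intro j hj; simp at hj
  | cons A Ls ih =>
    intro j hj
    cases j with
    | zero =>
      have hA : A.length = L := h A (by simp)
      simp [List.flatten_cons, List.take_append, hA]
    | succ j =>
      have hA : A.length = L := h A (by simp)
      have : (j+1)*L = A.length + j*L := by rw [hA]; ring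
      rw [List.flatten_cons, this, ← List.drop_drop, List.drop_left]
      exact ih (fun B hB => h B (by simp [hB])) j (by simpa using hj)

theorem stmt5 (k ℓ m : ℕ) (hm : 2 ≤ m) (hℓ : 1 ≤ ℓ)
    (Ss : List (List Bool)) (hSs : Ss.length = m)
    (hlen : ∀ Si ∈ Ss, Si.length = ℓ)
    (T : List Bool) (hT : T = (Ss.map (gamma k)).flatten)
    (S : List Bool) (hS : S.length = ℓ)
    (hcons : ∀ Si ∈ Ss, ham S Si ≤ k) :
    IsApproxCover k (gamma k S) T := by
  subst hT
  set L := 2*k+4 + ℓ*(4*k+12) with hL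
  have hLpos : 0 < L := by omega
  have hCl : (gamma k S).length = L := by rw [gamma_length, hS]
  have hall : ∀ A ∈ Ss.map (gamma k), A.length = L := by
    intro A hA
    obtain ⟨Si, hSi, rfl⟩ := List.mem_map.1 hA
    rw [gamma_length, hlen Si hSi]
  have hTlen : (Ss.map (gamma k)).flatten.length = m * L := by
    rw [flatten_length L _ hall, List.length_map, hSs]
  constructor
  · rw [hCl, hTlen]
    have h2 : 2 * L ≤ m * L := Nat.mul_le_mul_right L hm
    omega
  · intro t ht
    rw [hTlen] at ht
    have hj : t / L < m := Nat.div_lt_of_lt_mul (by rwa [Nat.mul_comm] at ht)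
    have hdm := Nat.div_add_mod t L
    have hmod := Nat.mod_lt t hLpos
    have hjlen : t / L < Ss.length := by omega
    have hjlen' : t / L < (Ss.map (gamma k)).length := by simpa using hjlen
    refine ⟨(t / L) * L, ?_, ?_, ?_, ?_⟩
    · rw [hCl, hTlen]
      calc (t / L) * L + L = (t / L + 1) * L := by ring
      _ ≤ m * L := Nat.mul_le_mul_right L (by omega)
    · rw [hCl, flatten_slice L _ hall (t/L) hjlen']
      have : (Ss.map (gamma k))[t/L] = gamma k (Ss[t/L]'hjlen) := by
        simp
      rw [this, ham_gamma k S _ (by rw [hS, hlen _ (Ss.getElem_mem hjlen)])]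
      exact hcons _ (Ss.getElem_mem hjlen)
    · exact Nat.div_mul_le_self t L
    · rw [hCl]
      have hc : L * (t/L) = (t/L) * L := Nat.mul_comm _ _
      omega
end

section
/- Let T be a string of length n, let M ≥ 1 be an integer, and call an index a special point if it is divisible by M. Let 0 ≤ a ≤ b < n and 0 ≤ a' ≤ b' < n be indices such that b − a ≥ M − 1 or b' − a' ≥ M − 1. Then there exist indices c and c' with a ≤ c ≤ b+1, a' ≤ c' ≤ b'+1, c − a < M, c' − a' < M, such that ed(T[a..b], T[a'..b']) = ed(T[a..c−1], T[a'..c'−1]) + ed(T[c..b], T[c'..b']) (where T[i..i−1] denotes the empty string), and such that at least one of the following holds: (M divides c and c ≤ b) or (M divides c' and c' ≤ b'). -/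
/-- Weighted edit-distance costs (Mathlib's former `Levenshtein.Cost`, removed since). -/
structure Levenshtein.Cost (α β δ : Type*) where
  delete : α → δ
  insert : β → δ
  substitute : α → β → δ

/-- Mathlib's former `Levenshtein.impl`, verbatim in meaning. -/
def Levenshtein.impl {α β δ : Type*} [AddZeroClass δ] [Min δ] (C : Levenshtein.Cost α β δ)
    (xs : List α) (y : β) (d : {r : List δ // 0 < r.length}) :
    {r : List δ // 0 < r.length} :=
  let ⟨ds, w⟩ := d
  xs.zip (ds.zip ds.tail) |>.foldr
    (init := ⟨[C.insert y + ds.getLast (List.ne_nil_of_length_pos w)], by simp⟩)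
    (fun ⟨x, d₀, d₁⟩ ⟨r, w⟩ =>
      ⟨min (C.delete x + r[0]) (min (C.insert y + d₀) (C.substitute x y + d₁)) :: r, by simp⟩)

/-- Mathlib's former `suffixLevenshtein`. -/
def suffixLevenshtein {α β δ : Type*} [AddZeroClass δ] [Min δ] (C : Levenshtein.Cost α β δ)
    (xs : List α) (ys : List β) : {r : List δ // 0 < r.length} :=
  ys.foldr
    (Levenshtein.impl C xs)
    (xs.foldr (init := ⟨[0], by simp⟩) (fun a ⟨r, w⟩ => ⟨(C.delete a + r[0]) :: r, by simp⟩))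

/-- Mathlib's former `levenshtein`: the weighted edit distance. -/
def levenshtein {α β δ : Type*} [AddZeroClass δ] [Min δ] (C : Levenshtein.Cost α β δ)
    (xs : List α) (ys : List β) : δ :=
  let ⟨r, w⟩ := suffixLevenshtein C xs ys
  r[0]


section LevPort

variable {α β δ : Type*} [AddZeroClass δ] [Min δ] (C : Levenshtein.Cost α β δ)

theorem Levenshtein.impl_cons_port {x : α} {xs : List α} {y : β} {d : δ} {ds : List δ}
    {w : 0 < (d :: ds).length} (w' : 0 < List.length ds) :
    Levenshtein.impl C (x :: xs) y ⟨d :: ds, w⟩ =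
      let ⟨r, w⟩ := Levenshtein.impl C xs y ⟨ds, w'⟩
      ⟨min (C.delete x + r[0]) (min (C.insert y + d) (C.substitute x y + ds[0])) :: r, by simp⟩ :=
  match ds, w' with | _ :: _, _ => rfl

theorem Levenshtein.impl_length_port {xs : List α} {y : β} (d : {r : List δ // 0 < r.length})
    (w : d.1.length = xs.length + 1) :
    (Levenshtein.impl C xs y d).1.length = xs.length + 1 := by
  induction xs generalizing d with
  | nil => rfl
  | cons x xs ih =>
    match d, w with
    | ⟨d₁ :: d₂ :: ds, _⟩, w =>
      rw [Levenshtein.impl_cons_port C (by simp)]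
      simp only [List.length_cons]
      congr 1
      exact ih ⟨d₂ :: ds, (by simp)⟩ (by simpa using w)

theorem suffixLevenshtein_length_port (xs : List α) (ys : List β) :
    (suffixLevenshtein C xs ys).1.length = xs.length + 1 := by
  induction ys with
  | nil =>
    dsimp [suffixLevenshtein]
    induction xs with
    | nil => rfl
    | cons _ xs ih =>
      simp_all
  | cons y ys ih =>
    dsimp [suffixLevenshtein]
    rw [Levenshtein.impl_length_port]
    exact ih

theorem Levenshtein.sub_hd_port (s : {r : List δ // 0 < r.length}) :
    s.1[0]'s.2 = s.1.headD 0 := by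
  rcases s with ⟨_ | ⟨a, r⟩, w⟩
  · simp at w
  · rfl

theorem levenshtein_hd_port (xs : List α) (ys : List β) :
    levenshtein C xs ys = (suffixLevenshtein C xs ys).1.headD 0 := by
  unfold levenshtein
  generalize suffixLevenshtein C xs ys = s
  rcases s with ⟨_ | ⟨a, r⟩, w⟩
  · simp at w
  · rfl

theorem Levenshtein.impl_cons_val_port (x : α) (xs : List α) (y : β) (d0 : δ)
    (d d' : {r : List δ // 0 < r.length}) (h : d.1 = d0 :: d'.1) :
    (Levenshtein.impl C (x :: xs) y d).1 =
      min (C.delete x + (Levenshtein.impl C xs y d').1.headD 0)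
        (min (C.insert y + d0) (C.substitute x y + d'.1.headD 0)) ::
        (Levenshtein.impl C xs y d').1 := by
  obtain ⟨l, w⟩ := d
  obtain ⟨l', w'⟩ := d'
  simp only at h
  subst h
  rcases l' with _ | ⟨e, l'⟩
  · simp at w'
  rw [Levenshtein.impl_cons_port C w']
  generalize Levenshtein.impl C xs y ⟨e :: l', w'⟩ = s
  rcases s with ⟨_ | ⟨a, r⟩, w2⟩
  · simp at w2
  · rfl

theorem suffixLevenshtein_cons₁_port (x : α) (xs : List α) (ys : List β) :
    (suffixLevenshtein C (x :: xs) ys).1 =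
      levenshtein C (x :: xs) ys :: (suffixLevenshtein C xs ys).1 := by
  induction ys with
  | nil => rfl
  | cons y ys ih =>
    rw [levenshtein_hd_port]
    have h1 : suffixLevenshtein C (x :: xs) (y :: ys) =
        Levenshtein.impl C (x :: xs) y (suffixLevenshtein C (x :: xs) ys) := rfl
    rw [h1, Levenshtein.impl_cons_val_port C x xs y _ _ _ ih]
    rfl

@[simp]
theorem levenshtein_nil_nil : levenshtein C [] [] = 0 := rfl

@[simp]
theorem levenshtein_nil_cons (y : β) (ys : List β) :
    levenshtein C [] (y :: ys) = C.insert y + levenshtein C [] ys := by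
  rw [levenshtein_hd_port, levenshtein_hd_port]
  have h1 : (suffixLevenshtein C [] (y :: ys)).1 =
      [C.insert y + (suffixLevenshtein C [] ys).1.getLast
        (List.ne_nil_of_length_pos (suffixLevenshtein C [] ys).2)] := rfl
  rw [h1]
  have hlen := suffixLevenshtein_length_port C [] ys
  generalize suffixLevenshtein C [] ys = s at hlen ⊢
  rcases s with ⟨_ | ⟨a, _ | ⟨b, r⟩⟩, w⟩
  · simp at w
  · rfl
  · simp at hlen

@[simp]
theorem levenshtein_cons_nil (x : α) (xs : List α) :
    levenshtein C (x :: xs) [] = C.delete x + levenshtein C xs [] :=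
  rfl

@[simp]
theorem levenshtein_cons_cons (x : α) (xs : List α) (y : β) (ys : List β) :
    levenshtein C (x :: xs) (y :: ys) =
      min (C.delete x + levenshtein C xs (y :: ys))
        (min (C.insert y + levenshtein C (x :: xs) ys)
          (C.substitute x y + levenshtein C xs ys)) := by
  rw [levenshtein_hd_port]
  have h1 : suffixLevenshtein C (x :: xs) (y :: ys) =
      Levenshtein.impl C (x :: xs) y (suffixLevenshtein C (x :: xs) ys) := rfl
  rw [h1, Levenshtein.impl_cons_val_port C x xs y _ _ _ (suffixLevenshtein_cons₁_port C x xs ys)]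
  simp only [levenshtein_hd_port, List.headD_cons]
  rfl

end LevPort

namespace Stmt11Aux

variable {α : Type*} (C : Levenshtein.Cost α α ℝ)

lemma lev_cons_right_le (X : List α) (y : α) (Y : List α) :
    levenshtein C X (y :: Y) ≤ C.insert y + levenshtein C X Y := by
  cases X with
  | nil => simp
  | cons x X =>
    rw [levenshtein_cons_cons]
    exact le_trans (min_le_right _ _) (min_le_left _ _)

lemma lev_cons_left_le (x : α) (X : List α) (Y : List α) :
    levenshtein C (x :: X) Y ≤ C.delete x + levenshtein C X Y := by
  cases Y with
  | nil => simp
  | cons y Y =>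
    rw [levenshtein_cons_cons]
    exact min_le_left _ _

lemma lev_sub_le (x : α) (X : List α) (y : α) (Y : List α) :
    levenshtein C (x :: X) (y :: Y) ≤ C.substitute x y + levenshtein C X Y := by
  rw [levenshtein_cons_cons]
  exact le_trans (min_le_right _ _) (min_le_right _ _)

lemma lev_append_le (B D : List α) : ∀ (A E : List α),
    levenshtein C (A ++ B) (E ++ D) ≤ levenshtein C A E + levenshtein C B D := by
  intro A
  induction A with
  | nil =>
    intro E
    induction E with
    | nil => simp
    | cons y E ihE =>
      simp only [List.nil_append, List.cons_append, levenshtein_nil_cons] at *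
      calc levenshtein C B (y :: (E ++ D)) ≤ C.insert y + levenshtein C B (E ++ D) :=
            lev_cons_right_le C _ _ _
        _ ≤ C.insert y + (levenshtein C [] E + levenshtein C B D) := by
            have := ihE
            linarith
        _ = C.insert y + levenshtein C [] E + levenshtein C B D := by ring
  | cons x A ihA =>
    intro E
    induction E with
    | nil =>
      simp only [List.cons_append, List.nil_append, levenshtein_cons_nil]
      calc levenshtein C (x :: (A ++ B)) D ≤ C.delete x + levenshtein C (A ++ B) D :=
            lev_cons_left_le C _ _ _
        _ ≤ C.delete x + (levenshtein C A [] + levenshtein C B D) := by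
            have := ihA []
            simp only [List.nil_append] at this
            linarith
        _ = C.delete x + levenshtein C A [] + levenshtein C B D := by ring
    | cons y E ihE =>
      simp only [List.cons_append] at *
      rw [levenshtein_cons_cons (xs := A) (ys := E)]
      rw [← min_add_add_right, ← min_add_add_right]
      refine le_min ?_ (le_min ?_ ?_)
      · calc levenshtein C (x :: (A ++ B)) (y :: (E ++ D))
            ≤ C.delete x + levenshtein C (A ++ B) (y :: (E ++ D)) := lev_cons_left_le C _ _ _
          _ ≤ C.delete x + (levenshtein C A (y :: E) + levenshtein C B D) := by
              have := ihA (y :: E); simp only [List.cons_append] at this; linarith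
          _ = C.delete x + levenshtein C A (y :: E) + levenshtein C B D := by ring
      · calc levenshtein C (x :: (A ++ B)) (y :: (E ++ D))
            ≤ C.insert y + levenshtein C (x :: (A ++ B)) (E ++ D) := lev_cons_right_le C _ _ _
          _ ≤ C.insert y + (levenshtein C (x :: A) E + levenshtein C B D) := by
              have := ihE; linarith
          _ = C.insert y + levenshtein C (x :: A) E + levenshtein C B D := by ring
      · calc levenshtein C (x :: (A ++ B)) (y :: (E ++ D))
            ≤ C.substitute x y + levenshtein C (A ++ B) (E ++ D) := lev_sub_le C _ _ _ _
          _ ≤ C.substitute x y + (levenshtein C A E + levenshtein C B D) := by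
              have := ihA E; linarith
          _ = C.substitute x y + levenshtein C A E + levenshtein C B D := by ring

lemma lev_nil_split : ∀ (j : ℕ) (Y : List α),
    levenshtein C [] Y = levenshtein C [] (Y.take j) + levenshtein C [] (Y.drop j) := by
  intro j
  induction j with
  | zero => simp
  | succ j ih =>
    intro Y
    cases Y with
    | nil => simp
    | cons y Y => simp [ih Y, add_assoc]

lemma lev_split_nil : ∀ (i : ℕ) (X : List α),
    levenshtein C X [] = levenshtein C (X.take i) [] + levenshtein C (X.drop i) [] := by
  intro i
  induction i with
  | zero => simp
  | succ i ih =>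
    intro X
    cases X with
    | nil => simp
    | cons x X => simp [ih X, add_assoc]

lemma lev_split_exists (X : List α) : ∀ (Y : List α) (i0 j0 : ℕ),
    (i0 ≤ X.length ∨ j0 ≤ Y.length) →
    ∃ i j, i ≤ i0 ∧ i ≤ X.length ∧ j ≤ j0 ∧ j ≤ Y.length ∧ (i = i0 ∨ j = j0) ∧
      levenshtein C X Y =
        levenshtein C (X.take i) (Y.take j) + levenshtein C (X.drop i) (Y.drop j) := by
  induction X with
  | nil =>
    intro Y i0 j0 h
    cases i0 with
    | zero =>
      exact ⟨0, 0, le_refl _, Nat.zero_le _, Nat.zero_le _, Nat.zero_le _, Or.inl rfl, by simp⟩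
    | succ i0 =>
      have hj : j0 ≤ Y.length := by
        rcases h with h | h
        · simp at h
        · exact h
      exact ⟨0, j0, Nat.zero_le _, Nat.zero_le _, le_refl _, hj, Or.inr rfl, by
        simpa using lev_nil_split C j0 Y⟩
  | cons x X ihX =>
    intro Y
    induction Y with
    | nil =>
      intro i0 j0 h
      cases j0 with
      | zero =>
        exact ⟨0, 0, Nat.zero_le _, Nat.zero_le _, le_refl _, Nat.zero_le _, Or.inr rfl, by simp⟩
      | succ j0 =>
        have hi : i0 ≤ (x :: X).length := by
          rcases h with h | h
          · exact h
          · simp at h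
        exact ⟨i0, 0, le_refl _, hi, Nat.zero_le _, Nat.zero_le _, Or.inl rfl, by
          simpa using lev_split_nil C i0 (x :: X)⟩
    | cons y Y ihY =>
      intro i0 j0 h
      cases i0 with
      | zero =>
        exact ⟨0, 0, le_refl _, Nat.zero_le _, Nat.zero_le _, Nat.zero_le _, Or.inl rfl, by simp⟩
      | succ i0 =>
      cases j0 with
      | zero =>
        exact ⟨0, 0, Nat.zero_le _, Nat.zero_le _, le_refl _, Nat.zero_le _, Or.inr rfl, by simp⟩
      | succ j0 =>
      have hcc := levenshtein_cons_cons (C := C) x X y Y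
      rcases min_choice (C.delete x + levenshtein C X (y :: Y))
          (min (C.insert y + levenshtein C (x :: X) Y)
            (C.substitute x y + levenshtein C X Y)) with h1 | h1
      · -- delete branch
        have hbr : levenshtein C (x :: X) (y :: Y) =
            C.delete x + levenshtein C X (y :: Y) := hcc.trans h1
        obtain ⟨i, j, hi, hiX, hj, hjY, htr, heq⟩ := ihX (y :: Y) i0 (j0 + 1) (by
          rcases h with h | h
          · left; simp only [List.length_cons] at h; omega
          · right; exact h)
        refine ⟨i + 1, j, Nat.succ_le_succ hi, by simpa using Nat.succ_le_succ hiX,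
          hj, hjY, ?_, ?_⟩
        · rcases htr with rfl | rfl
          · exact Or.inl rfl
          · exact Or.inr rfl
        · apply le_antisymm
          · conv_lhs => rw [← List.take_append_drop (i + 1) (x :: X),
              ← List.take_append_drop j (y :: Y)]
            exact lev_append_le C _ _ _ _
          · simp only [List.take_succ_cons, List.drop_succ_cons]
            have h4 := lev_cons_left_le C x (X.take i) ((y :: Y).take j)
            linarith
      rcases min_choice (C.insert y + levenshtein C (x :: X) Y)
          (C.substitute x y + levenshtein C X Y) with h2 | h2
      · -- insert branch
        have hbr : levenshtein C (x :: X) (y :: Y) =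
            C.insert y + levenshtein C (x :: X) Y := by rw [hcc, h1, h2]
        obtain ⟨i, j, hi, hiX, hj, hjY, htr, heq⟩ := ihY (i0 + 1) j0 (by
          rcases h with h | h
          · left; exact h
          · right; simp only [List.length_cons] at h; omega)
        refine ⟨i, j + 1, hi, hiX, Nat.succ_le_succ hj, by simpa using Nat.succ_le_succ hjY,
          ?_, ?_⟩
        · rcases htr with rfl | rfl
          · exact Or.inl rfl
          · exact Or.inr rfl
        · apply le_antisymm
          · conv_lhs => rw [← List.take_append_drop i (x :: X),
              ← List.take_append_drop (j + 1) (y :: Y)]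
            exact lev_append_le C _ _ _ _
          · simp only [List.take_succ_cons, List.drop_succ_cons]
            have h4 := lev_cons_right_le C ((x :: X).take i) y (Y.take j)
            linarith
      · -- substitute branch
        have hbr : levenshtein C (x :: X) (y :: Y) =
            C.substitute x y + levenshtein C X Y := by rw [hcc, h1, h2]
        obtain ⟨i, j, hi, hiX, hj, hjY, htr, heq⟩ := ihX Y i0 j0 (by
          rcases h with h | h
          · left; simp only [List.length_cons] at h; omega
          · right; simp only [List.length_cons] at h; omega)
        refine ⟨i + 1, j + 1, Nat.succ_le_succ hi, by simpa using Nat.succ_le_succ hiX,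
          Nat.succ_le_succ hj, by simpa using Nat.succ_le_succ hjY, ?_, ?_⟩
        · rcases htr with rfl | rfl
          · exact Or.inl rfl
          · exact Or.inr rfl
        · apply le_antisymm
          · conv_lhs => rw [← List.take_append_drop (i + 1) (x :: X),
              ← List.take_append_drop (j + 1) (y :: Y)]
            exact lev_append_le C _ _ _ _
          · simp only [List.take_succ_cons, List.drop_succ_cons]
            have h4 := lev_sub_le C x (X.take i) y (Y.take j)
            linarith

lemma next_multiple (M a : ℕ) (hM : 1 ≤ M) : ∃ r, r < M ∧ M ∣ (a + r) := by
  by_cases hr : a % M = 0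
  · exact ⟨0, hM, by simpa using Nat.dvd_of_mod_eq_zero hr⟩
  · refine ⟨M - a % M, ?_, ⟨a / M + 1, ?_⟩⟩
    · have := Nat.mod_lt a (show 0 < M by omega)
      omega
    · have h1 := Nat.div_add_mod a M
      have h2 := Nat.mod_lt a (show 0 < M by omega)
      rw [Nat.mul_add, Nat.mul_one]
      omega

end Stmt11Aux

theorem stmt11 {α : Type*} (C : Levenshtein.Cost α α ℝ)
    (hdel : ∀ x, 0 ≤ C.delete x) (hins : ∀ x, 0 ≤ C.insert x)
    (hsub : ∀ x y, 0 ≤ C.substitute x y) (hrefl : ∀ x, C.substitute x x = 0)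
    (T : List α) (n : ℕ) (hn : T.length = n)
    (M : ℕ) (hM : 1 ≤ M)
    (a b a' b' : ℕ) (hab : a ≤ b) (hb : b < n) (hab' : a' ≤ b') (hb' : b' < n)
    (hbig : M - 1 ≤ b - a ∨ M - 1 ≤ b' - a') :
    ∃ c c', a ≤ c ∧ c ≤ b + 1 ∧ a' ≤ c' ∧ c' ≤ b' + 1 ∧ c - a < M ∧ c' - a' < M ∧
      levenshtein C ((T.drop a).take (b + 1 - a)) ((T.drop a').take (b' + 1 - a')) =
        levenshtein C ((T.drop a).take (c - a)) ((T.drop a').take (c' - a')) +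
          levenshtein C ((T.drop c).take (b + 1 - c)) ((T.drop c').take (b' + 1 - c')) ∧
      ((M ∣ c ∧ c ≤ b) ∨ (M ∣ c' ∧ c' ≤ b')) := by
  obtain ⟨p, hpM, hpdvd⟩ := Stmt11Aux.next_multiple M a hM
  obtain ⟨q, hqM, hqdvd⟩ := Stmt11Aux.next_multiple M a' hM
  set X : List α := (T.drop a).take (b + 1 - a) with hX
  set Y : List α := (T.drop a').take (b' + 1 - a') with hY
  have hlenX : X.length = b + 1 - a := by
    simp only [hX, List.length_take, List.length_drop, hn]
    omega
  have hlenY : Y.length = b' + 1 - a' := by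
    simp only [hY, List.length_take, List.length_drop, hn]
    omega
  set i0 : ℕ := if p ≤ b - a then p else (b + 1 - a) + 1 with hi0
  set j0 : ℕ := if q ≤ b' - a' then q else (b' + 1 - a') + 1 with hj0
  have hyp : i0 ≤ X.length ∨ j0 ≤ Y.length := by
    rcases hbig with h | h
    · left
      rw [hlenX, hi0, if_pos (by omega)]
      omega
    · right
      rw [hlenY, hj0, if_pos (by omega)]
      omega
  obtain ⟨i, j, hi, hiX, hj, hjY, htr, heq⟩ := Stmt11Aux.lev_split_exists C X Y i0 j0 hyp
  rw [hlenX] at hiX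
  rw [hlenY] at hjY
  have hiM : i < M := by
    rw [hi0] at hi
    split_ifs at hi with h
    · omega
    · omega
  have hjM : j < M := by
    rw [hj0] at hj
    split_ifs at hj with h
    · omega
    · omega
  refine ⟨a + i, a' + j, by omega, by omega, by omega, by omega, by omega, by omega, ?_, ?_⟩
  · -- the split equation
    have e1 : X.take i = (T.drop a).take ((a + i) - a) := by
      rw [hX, List.take_take]
      congr 1
      omega
    have e2 : Y.take j = (T.drop a').take ((a' + j) - a') := by
      rw [hY, List.take_take]
      congr 1
      omega
    have e3 : X.drop i = (T.drop (a + i)).take (b + 1 - (a + i)) := by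
      rw [hX, List.drop_take, List.drop_drop]
      congr 1 <;> omega
    have e4 : Y.drop j = (T.drop (a' + j)).take (b' + 1 - (a' + j)) := by
      rw [hY, List.drop_take, List.drop_drop]
      congr 1 <;> omega
    rw [← e1, ← e2, ← e3, ← e4]
    exact heq
  · -- the divisibility condition
    rcases htr with rfl | rfl
    · left
      rw [hi0] at hiX hiM ⊢
      split_ifs at hiX hiM ⊢ with h
      · exact ⟨hpdvd, by omega⟩
      · omega
    · right
      rw [hj0] at hjY hjM ⊢
      split_ifs at hjY hjM ⊢ with h
      · exact ⟨hqdvd, by omega⟩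
      · omega
end
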